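/- Let S be a symmetric numerical semigroup with multiplicity m ≥ 3, conductor c, delta invariant δ = c/2, and weight function w₀. Then the sublevel set {ℓ ∈ [0,c] ∩ ℤ : w₀(ℓ) ≤ 0} equals {0} ∪ ([2, c−2] ∩ ℤ) ∪ {c}. -/

import Mathlib

open Finset

open scoped Classical in
/-- Weight function of a subset `S ⊆ ℕ`:
`w0 S ℓ = #([0,ℓ) ∩ S) − #([0,ℓ) \ S)`. -/
noncomputable def w0 (S : Set ℕ) (l : ℕ) : ℤ :=
  (((Finset.range l).filter (fun k => k ∈ S)).card : ℤ) -
    (((Finset.range l).filter (fun k => k ∉ S)).card : ℤ)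

open scoped Classical

/-- number of elements of `S` in `[0, l)` -/
private noncomputable def Nlow (S : Set ℕ) (l : ℕ) : ℕ :=
  ((Finset.range l).filter (fun k => k ∈ S)).card

/-- number of gaps in `[0, l)` -/
private noncomputable def Glow (S : Set ℕ) (l : ℕ) : ℕ :=
  ((Finset.range l).filter (fun k => k ∉ S)).card

/-- number of elements of `S` in `[c-l, c)` -/
private noncomputable def Ntop (S : Set ℕ) (c l : ℕ) : ℕ :=
  ((Finset.Ico (c - l) c).filter (fun k => k ∈ S)).card

/-- number of gaps in `[c-l, c)` -/
private noncomputable def Gtop (S : Set ℕ) (c l : ℕ) : ℕ :=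
  ((Finset.Ico (c - l) c).filter (fun k => k ∉ S)).card

private lemma w0_eq (S : Set ℕ) (l : ℕ) : w0 S l = (Nlow S l : ℤ) - Glow S l := rfl

private lemma NL_add_GL (S : Set ℕ) (l : ℕ) : Nlow S l + Glow S l = l := by
  have := Finset.card_filter_add_card_filter_not
    (s := Finset.range l) (p := fun k => k ∈ S)
  simpa [Nlow, Glow] using this

private lemma NT_add_GT (S : Set ℕ) (c l : ℕ) (hl : l ≤ c) : Ntop S c l + Gtop S c l = l := by
  have := Finset.card_filter_add_card_filter_not
    (s := Finset.Ico (c - l) c) (p := fun k => k ∈ S)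
  have hcard : (Finset.Ico (c - l) c).card = l := by
    rw [Nat.card_Ico]; omega
  simpa [Ntop, Gtop, hcard] using this

private lemma NL_eq_GT (S : Set ℕ) (c : ℕ)
    (hsym : ∀ ℓ < c, ℓ ∈ S ↔ (c - 1 - ℓ) ∉ S) {l : ℕ} (hl : l ≤ c) :
    Nlow S l = Gtop S c l := by
  apply Finset.card_nbij' (fun a => c - 1 - a) (fun b => c - 1 - b)
  · intro a ha
    simp only [Finset.mem_coe, Finset.mem_filter, Finset.mem_range] at ha
    have hac : a < c := lt_of_lt_of_le ha.1 hl
    simp only [Finset.mem_coe, Finset.mem_filter, Finset.mem_Ico]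
    refine ⟨⟨by omega, by omega⟩, ?_⟩
    exact (hsym a hac).1 ha.2
  · intro b hb
    simp only [Finset.mem_coe, Finset.mem_filter, Finset.mem_Ico] at hb
    simp only [Finset.mem_coe, Finset.mem_filter, Finset.mem_range]
    have hbc : b < c := hb.1.2
    have h1 : c - 1 - b < c := by omega
    refine ⟨by omega, ?_⟩
    have := hsym (c - 1 - b) h1
    have heq : c - 1 - (c - 1 - b) = b := by omega
    rw [heq] at this
    exact this.2 hb.2
  · intro a ha
    simp only [Finset.mem_coe, Finset.mem_filter, Finset.mem_range] at ha
    have : a < c := lt_of_lt_of_le ha.1 hl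
    dsimp only
    omega
  · intro b hb
    simp only [Finset.mem_coe, Finset.mem_filter, Finset.mem_Ico] at hb
    dsimp only
    omega

private lemma GL_eq_NT (S : Set ℕ) (c : ℕ)
    (hsym : ∀ ℓ < c, ℓ ∈ S ↔ (c - 1 - ℓ) ∉ S) {l : ℕ} (hl : l ≤ c) :
    Glow S l = Ntop S c l := by
  have h1 := NL_add_GL S l
  have h2 := NT_add_GT S c l hl
  have h3 := NL_eq_GT S c hsym hl
  omega

private lemma w0_eq_diff (S : Set ℕ) (c : ℕ)
    (hsym : ∀ ℓ < c, ℓ ∈ S ↔ (c - 1 - ℓ) ∉ S) {l : ℕ} (hl : l ≤ c) :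
    w0 S l = (Nlow S l : ℤ) - Ntop S c l := by
  rw [w0_eq, GL_eq_NT S c hsym hl]

private lemma w0_conductor (S : Set ℕ) (c : ℕ)
    (hsym : ∀ ℓ < c, ℓ ∈ S ↔ (c - 1 - ℓ) ∉ S) : w0 S c = 0 := by
  have h := NL_eq_GT S c hsym (le_refl c)
  have hGT : Gtop S c c = Glow S c := by
    unfold Gtop Glow
    rw [Nat.sub_self, ← Finset.range_eq_Ico]
  rw [w0_eq, h, hGT, sub_self]

/-- splitting the count over `[0,c)` at `c - l` -/
private lemma NL_split (S : Set ℕ) (c l : ℕ) (hl : l ≤ c) :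
    Nlow S c = Nlow S (c - l) + Ntop S c l := by
  unfold Nlow Ntop
  simp only [Finset.range_eq_Ico]
  rw [← Finset.Ico_union_Ico_eq_Ico (Nat.zero_le (c - l)) (Nat.sub_le c l), Finset.filter_union,
    Finset.card_union_of_disjoint
      (Finset.disjoint_filter_filter (Finset.Ico_disjoint_Ico_consecutive 0 (c - l) c))]

private lemma GL_split (S : Set ℕ) (c l : ℕ) (hl : l ≤ c) :
    Glow S c = Glow S (c - l) + Gtop S c l := by
  unfold Glow Gtop
  simp only [Finset.range_eq_Ico]
  rw [← Finset.Ico_union_Ico_eq_Ico (Nat.zero_le (c - l)) (Nat.sub_le c l), Finset.filter_union,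
    Finset.card_union_of_disjoint
      (Finset.disjoint_filter_filter (Finset.Ico_disjoint_Ico_consecutive 0 (c - l) c))]

/-- Gorenstein symmetry of the weight function -/
private lemma w0_mirror (S : Set ℕ) (c : ℕ)
    (hsym : ∀ ℓ < c, ℓ ∈ S ↔ (c - 1 - ℓ) ∉ S) {l : ℕ} (hl : l ≤ c) :
    w0 S (c - l) = w0 S l := by
  have h1 := NL_split S c l hl
  have h2 := GL_split S c l hl
  have h3 := NL_eq_GT S c hsym (le_refl c)
  have hGT : Gtop S c c = Glow S c := by
    unfold Gtop Glow
    rw [Nat.sub_self, ← Finset.range_eq_Ico]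
  have h4 : Nlow S c = Glow S c := by rw [h3, hGT]
  have h5 := NL_eq_GT S c hsym hl
  have h6 := GL_eq_NT S c hsym hl
  rw [w0_eq, w0_eq]
  have e1 : (Nlow S (c - l) : ℤ) = Nlow S c - Ntop S c l := by
    rw [h1]; push_cast; ring
  have e2 : (Glow S (c - l) : ℤ) = Glow S c - Gtop S c l := by
    rw [h2]; push_cast; ring
  rw [e1, e2, h5, h6]
  have : (Nlow S c : ℤ) = Glow S c := by exact_mod_cast h4
  rw [this]; ring

/-- Injection case (a): if `c - l ∈ S` then shift by `c - l`. -/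
private lemma inj_a (S : Set ℕ) (c : ℕ)
    (hadd : ∀ a b, a ∈ S → b ∈ S → a + b ∈ S)
    {l : ℕ} (hl : l ≤ c) (hcl : c - l ∈ S) :
    Nlow S l ≤ Ntop S c l := by
  apply Finset.card_le_card_of_injOn (fun s => s + (c - l))
  · intro a ha
    simp only [Finset.mem_coe, Finset.mem_filter, Finset.mem_range] at ha
    simp only [Finset.mem_coe, Finset.mem_filter, Finset.mem_Ico]
    exact ⟨⟨by omega, by omega⟩, hadd a (c - l) ha.2 hcl⟩
  · intro a _ b _ h
    simpa using h

/-- Injection case (b): the hard case with a gap pair. -/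
private lemma inj_b (S : Set ℕ) (c : ℕ)
    (hadd : ∀ a b, a ∈ S → b ∈ S → a + b ∈ S)
    (hsym : ∀ ℓ < c, ℓ ∈ S ↔ (c - 1 - ℓ) ∉ S)
    {l : ℕ} (h2 : 2 ≤ l) (hlc : l + 2 ≤ c) (hc1 : c - l - 1 ∈ S)
    (y : ℕ) (hy1 : 1 ≤ y) (hy2 : y ≤ l - 1) (hyS : y ∉ S) (hlyS : l - y ∉ S) :
    Nlow S l ≤ Ntop S c l := by
  apply Finset.card_le_card_of_injOn (fun s => if s = 0 then c - l - 1 + y else s + (c - l - 1))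
  · intro a ha
    simp only [Finset.mem_coe, Finset.mem_filter, Finset.mem_range] at ha
    simp only [Finset.mem_coe, Finset.mem_filter, Finset.mem_Ico]
    by_cases h : a = 0
    · simp only [h, if_true]
      refine ⟨⟨by omega, by omega⟩, ?_⟩
      have hlt : c - l - 1 + y < c := by omega
      have := hsym (c - l - 1 + y) hlt
      have heq : c - 1 - (c - l - 1 + y) = l - y := by omega
      rw [heq] at this
      exact this.2 hlyS
    · simp only [h, if_false]
      refine ⟨⟨by omega, by omega⟩, hadd a (c - l - 1) ha.2 hc1⟩
  · intro a ha b hb h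
    simp only [Finset.coe_filter, Set.mem_setOf_eq, Finset.mem_range] at ha hb
    by_cases hA : a = 0 <;> by_cases hB : b = 0
    · omega
    · exfalso
      simp only [hA, if_true, hB, if_false] at h
      have : b = y := by omega
      exact hyS (this ▸ hb.2)
    · exfalso
      simp only [hA, if_false, hB, if_true] at h
      have : a = y := by omega
      exact hyS (this ▸ ha.2)
    · simp only [hA, hB, if_false] at h
      omega

/-- The "run" contradiction: if every `y ∈ [1, l-1]` has `y ∈ S` or `l - y ∈ S`,
with `2 ≤ l`, `2l ≤ c`, we get a contradiction. -/
private lemma run_contradiction (S : Set ℕ) (c : ℕ)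
    (hadd : ∀ a b, a ∈ S → b ∈ S → a + b ∈ S)
    (hcmin : ∀ c', (∀ n, c' ≤ n → n ∈ S) → c ≤ c')
    (m : ℕ) (hm : m ∈ S) (hm3 : 3 ≤ m)
    (hmmin : ∀ k ∈ S, 0 < k → m ≤ k)
    {l : ℕ} (h2 : 2 ≤ l) (hlc : 2 * l ≤ c)
    (hall : ∀ y, 1 ≤ y → y ≤ l - 1 → (y ∈ S ∨ l - y ∈ S)) : False := by
  have h1S : (1 : ℕ) ∉ S := fun h => by have := hmmin 1 h one_pos; omega
  have hl1 : l - 1 ∈ S := by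
    rcases hall 1 le_rfl (by omega) with h | h
    · exact absurd h h1S
    · exact h
  have hml : m ≤ l - 1 := hmmin (l - 1) hl1 (by omega)
  -- the run [l-m+1, l-1] ⊆ S
  have hrun : ∀ y, 1 ≤ y → y ≤ m - 1 → l - y ∈ S := by
    intro y hy1 hy2
    have hyS : y ∉ S := fun h => by have := hmmin y h (by omega); omega
    rcases hall y hy1 (by omega) with h | h
    · exact absurd h hyS
    · exact h
  -- sums: 2l - i ∈ S for 2 ≤ i ≤ 2m-2
  have hsums : ∀ i, 2 ≤ i → i ≤ 2 * m - 2 → 2 * l - i ∈ S := by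
    intro i hi1 hi2
    obtain ⟨a, b, ha1, ham, hb1, hbm, hab⟩ :
        ∃ a b, 1 ≤ a ∧ a ≤ m - 1 ∧ 1 ≤ b ∧ b ≤ m - 1 ∧ a + b = i :=
      ⟨min (i - 1) (m - 1), i - min (i - 1) (m - 1), by omega, by omega, by omega, by omega,
        by omega⟩
    have hA := hrun a ha1 ham
    have hB := hrun b hb1 hbm
    have := hadd _ _ hA hB
    have heq : l - a + (l - b) = 2 * l - i := by omega
    rwa [heq] at this
  -- everything at least 2l - 2m + 2 is in S
  have hbase : ∀ q r, r ≤ m - 1 → 2 * l - 2 * m + 2 + r + m * q ∈ S := by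
    intro q
    induction q with
    | zero =>
      intro r hr
      have := hsums (2 * m - 2 - r) (by omega) (by omega)
      have heq : 2 * l - (2 * m - 2 - r) = 2 * l - 2 * m + 2 + r + m * 0 := by omega
      rwa [heq] at this
    | succ q ih =>
      intro r hr
      have := hadd _ m (ih r hr) hm
      have heq : 2 * l - 2 * m + 2 + r + m * q + m = 2 * l - 2 * m + 2 + r + m * (q + 1) := by ring
      rwa [heq] at this
  have htail : ∀ x, 2 * l - 2 * m + 2 ≤ x → x ∈ S := by
    intro x hx
    have hmod := Nat.mod_add_div (x - (2 * l - 2 * m + 2)) m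
    have hlt : (x - (2 * l - 2 * m + 2)) % m < m := Nat.mod_lt _ (by omega)
    have := hbase ((x - (2 * l - 2 * m + 2)) / m) ((x - (2 * l - 2 * m + 2)) % m) (by omega)
    have heq : 2 * l - 2 * m + 2 + (x - (2 * l - 2 * m + 2)) % m
        + m * ((x - (2 * l - 2 * m + 2)) / m) = x := by omega
    rwa [heq] at this
  have := hcmin (2 * l - 2 * m + 2) htail
  omega

/-- Main inequality: `w0 S l ≤ 0` for `2 ≤ l ≤ c - 2`, hard case. -/
private lemma hard_case (S : Set ℕ) (c : ℕ)
    (hadd : ∀ a b, a ∈ S → b ∈ S → a + b ∈ S)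
    (hcmin : ∀ c', (∀ n, c' ≤ n → n ∈ S) → c ≤ c')
    (hsym : ∀ ℓ < c, ℓ ∈ S ↔ (c - 1 - ℓ) ∉ S)
    (m : ℕ) (hm : m ∈ S) (hm3 : 3 ≤ m)
    (hmmin : ∀ k ∈ S, 0 < k → m ≤ k)
    {l : ℕ} (h2 : 2 ≤ l) (hlc : l + 2 ≤ c) (h2l : 2 * l ≤ c)
    (hlS : l ∉ S) : w0 S l ≤ 0 := by
  have hc1 : c - l - 1 ∈ S := by
    have := hsym l (by omega)
    have heq : c - 1 - l = c - l - 1 := by omega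
    rw [heq] at this
    by_contra hcon
    exact hlS (this.2 hcon)
  by_cases hex : ∃ y, 1 ≤ y ∧ y ≤ l - 1 ∧ y ∉ S ∧ l - y ∉ S
  · obtain ⟨y, hy1, hy2, hyS, hlyS⟩ := hex
    have hle := inj_b S c hadd hsym h2 hlc hc1 y hy1 hy2 hyS hlyS
    rw [w0_eq_diff S c hsym (by omega : l ≤ c)]
    have : (Nlow S l : ℤ) ≤ Ntop S c l := by exact_mod_cast hle
    omega
  · push_neg at hex
    exfalso
    exact run_contradiction S c hadd hcmin m hm hm3 hmmin h2 h2l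
      (fun y hy1 hy2 => by
        by_cases hy : y ∈ S
        · exact Or.inl hy
        · exact Or.inr (by
            by_contra hcon
            exact hcon (hex y hy1 hy2 hy)))

/-- Main inequality: `w0 S l ≤ 0` for `2 ≤ l ≤ c - 2`. -/
private lemma main_ineq (S : Set ℕ) (c : ℕ)
    (hadd : ∀ a b, a ∈ S → b ∈ S → a + b ∈ S)
    (hcmin : ∀ c', (∀ n, c' ≤ n → n ∈ S) → c ≤ c')
    (hsym : ∀ ℓ < c, ℓ ∈ S ↔ (c - 1 - ℓ) ∉ S)
    (m : ℕ) (hm : m ∈ S) (hm3 : 3 ≤ m)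
    (hmmin : ∀ k ∈ S, 0 < k → m ≤ k)
    {l : ℕ} (h2 : 2 ≤ l) (hlc : l + 2 ≤ c) : w0 S l ≤ 0 := by
  by_cases hcl : c - l ∈ S
  · have hle := inj_a S c hadd (by omega : l ≤ c) hcl
    rw [w0_eq_diff S c hsym (by omega : l ≤ c)]
    have : (Nlow S l : ℤ) ≤ Ntop S c l := by exact_mod_cast hle
    omega
  · by_cases hlS : l ∈ S
    · -- work at l' = c - l, with c - l' = l ∈ S
      have hl' : c - (c - l) ∈ S := by
        have : c - (c - l) = l := by omega
        rwa [this]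
      have hle := inj_a S c hadd (by omega : c - l ≤ c) hl'
      have hw : w0 S (c - l) ≤ 0 := by
        rw [w0_eq_diff S c hsym (by omega : c - l ≤ c)]
        have : (Nlow S (c - l) : ℤ) ≤ Ntop S c (c - l) := by exact_mod_cast hle
        omega
      have := w0_mirror S c hsym (by omega : l ≤ c)
      omega
    · -- l ∉ S and c - l ∉ S
      by_cases h2l : 2 * l ≤ c
      · exact hard_case S c hadd hcmin hsym m hm hm3 hmmin h2 hlc h2l hlS
      · -- mirror: work at c - l
        have hw : w0 S (c - l) ≤ 0 := by
          apply hard_case S c hadd hcmin hsym m hm hm3 hmmin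
            (by omega : 2 ≤ c - l) (by omega : (c - l) + 2 ≤ c) (by omega : 2 * (c - l) ≤ c)
          exact hcl
        have := w0_mirror S c hsym (by omega : l ≤ c)
        omega

theorem sublevel_zero_description (S : Set ℕ) (h0 : 0 ∈ S)
    (hadd : ∀ a b, a ∈ S → b ∈ S → a + b ∈ S)
    (hfin : (Sᶜ : Set ℕ).Finite) (c : ℕ)
    (hc : ∀ n, c ≤ n → n ∈ S)
    (hcmin : ∀ c', (∀ n, c' ≤ n → n ∈ S) → c ≤ c')
    (hsym : ∀ ℓ < c, ℓ ∈ S ↔ (c - 1 - ℓ) ∉ S)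
    (m : ℕ) (hm : m ∈ S) (hm3 : 3 ≤ m)
    (hmmin : ∀ k ∈ S, 0 < k → m ≤ k) :
    {ℓ : ℕ | ℓ ≤ c ∧ w0 S ℓ ≤ 0} = {0} ∪ Set.Icc 2 (c - 2) ∪ {c} := by
  -- basic facts
  have h1S : (1 : ℕ) ∉ S := fun h => by have := hmmin 1 h one_pos; omega
  have hm1S : m - 1 ∉ S := fun h => by have := hmmin (m - 1) h (by omega); omega
  have hcm : m ≤ c := by
    by_contra h
    exact hm1S (hc (m - 1) (by omega))
  -- c is even: 2 * Nlow S c = c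
  have h4 : Nlow S c = Glow S c := by
    have h3 := NL_eq_GT S c hsym (le_refl c)
    have hGT : Gtop S c c = Glow S c := by
      unfold Gtop Glow
      rw [Nat.sub_self, ← Finset.range_eq_Ico]
    rw [h3, hGT]
  have hNGc := NL_add_GL S c
  have hceven : 2 * Nlow S c = c := by omega
  have hc4 : 4 ≤ c := by omega
  -- small values
  have hw0 : w0 S 0 = 0 := by simp [w0]
  have hw1 : w0 S 1 = 1 := by
    simp [w0, Finset.range_one, Finset.filter_singleton, h0]
  have hwc : w0 S c = 0 := w0_conductor S c hsym
  have hwc1 : w0 S (c - 1) = 1 := by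
    have := w0_mirror S c hsym (by omega : 1 ≤ c)
    omega
  ext l
  simp only [Set.mem_setOf_eq, Set.mem_union, Set.mem_singleton_iff, Set.mem_Icc]
  constructor
  · rintro ⟨hlc, hw⟩
    by_cases hl0 : l = 0
    · exact Or.inl (Or.inl hl0)
    by_cases hlceq : l = c
    · exact Or.inr hlceq
    by_cases hl1 : l = 1
    · exfalso; rw [hl1, hw1] at hw; omega
    by_cases hlc1 : l = c - 1
    · exfalso; rw [hlc1, hwc1] at hw; omega
    · exact Or.inl (Or.inr ⟨by omega, by omega⟩)
  · rintro ((h | ⟨ha, hb⟩) | h)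
    · subst h; exact ⟨by omega, by omega⟩
    · exact ⟨by omega, main_ineq S c hadd hcmin hsym m hm hm3 hmmin ha (by omega)⟩
    · exact ⟨by omega, by rw [h]; omega⟩
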